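/- arXiv:2006.02429 — 2 statements merged into one kernel-verified Lean document; each statement's English description precedes it below -/
import Mathlib

section
/- For every integer n ≥ 3, the set S = {n^k : k ≥ 0} ⊆ ℤ forms a co-minimal pair with some subset S' ⊆ ℤ, i.e., S + S' = ℤ, (S \ {s}) + S' ≠ ℤ for all s ∈ S, and S + (S' \ {s'}) ≠ ℤ for all s' ∈ S'. -/
open Pointwise

open scoped Classical

namespace Stmt18Aux

/-- Key arithmetic lemma: if `|c| < (n-1) n^(k-1)` and `c` is not a power of `n`,
then `c ≠ n^k - n^j + n^a`. -/
lemma lemA {n : ℤ} (hn : 3 ≤ n) {c : ℤ} {k : ℕ} (hk : 1 ≤ k)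
    (hbig : |c| < (n - 1) * n ^ (k - 1)) (hc : ∀ b : ℕ, c ≠ n ^ b)
    (j a : ℕ) : c ≠ n ^ k - n ^ j + n ^ a := by
  intro heq
  have hn1 : (1 : ℤ) ≤ n := by linarith
  have habs := le_abs_self c
  have habs' := neg_abs_le c
  have hkk : k - 1 + 1 = k := by omega
  have hpk : n ^ k = n ^ (k - 1) * n := by
    rw [← pow_succ, hkk]
  have hk1nn : (0 : ℤ) ≤ n ^ (k - 1) := pow_nonneg (by linarith) _
  have hknn : (0 : ℤ) ≤ n ^ k := pow_nonneg (by linarith) _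
  rcases lt_trichotomy j k with hjk | hjk | hjk
  · -- j < k
    have h1 : n ^ j ≤ n ^ (k - 1) := pow_le_pow_right₀ hn1 (by omega)
    have h2 : (0 : ℤ) ≤ n ^ a := pow_nonneg (by linarith) _
    nlinarith
  · -- j = k
    subst hjk
    exact hc a (by linarith)
  · -- k < j
    rcases lt_trichotomy a j with haj | haj | haj
    · -- a < j
      have hjj : j - 1 + 1 = j := by omega
      have hpj : n ^ j = n ^ (j - 1) * n := by rw [← pow_succ, hjj]
      have f1 : n ^ a ≤ n ^ (j - 1) := pow_le_pow_right₀ hn1 (by omega)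
      have f3 : n ^ k ≤ n ^ (j - 1) := pow_le_pow_right₀ hn1 (by omega)
      have f4 : (n - 1) * n ^ (k - 1) ≤ n ^ k := by
        rw [hpk]; nlinarith
      nlinarith
    · -- a = j
      subst haj
      exact hc k (by linarith)
    · -- j < a
      have f1 : n ^ j ≤ n ^ a := pow_le_pow_right₀ hn1 (by omega)
      have f4 : (n - 1) * n ^ (k - 1) ≤ n ^ k := by
        rw [hpk]; nlinarith
      nlinarith

lemma foldr_max_nonneg (l : List ℤ) : 0 ≤ l.foldr max 0 := by
  induction l with
  | nil => simp
  | cons x t ih => simp only [List.foldr_cons]; exact le_trans ih (le_max_right _ _)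

lemma le_foldr_max (l : List ℤ) {x : ℤ} (hx : x ∈ l) : x ≤ l.foldr max 0 := by
  induction l with
  | nil => simp at hx
  | cons y t ih =>
    rcases List.mem_cons.mp hx with h | h
    · subst h; exact le_max_left _ _
    · exact le_trans (ih h) (le_max_right _ _)

/-- The exponent chosen at a greedy step. -/
noncomputable def bigK (m : ℤ) (Lp : List ℤ) : ℕ :=
  ((Lp.map (fun s' => |m - s'|)).foldr max 0).toNat + 1

lemma bigK_pos (m : ℤ) (Lp : List ℤ) : 1 ≤ bigK m Lp := Nat.le_add_left 1 _

lemma bigK_big {n : ℤ} (hn : 3 ≤ n) (m : ℤ) (Lp : List ℤ) {s' : ℤ} (hs' : s' ∈ Lp) :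
    |m - s'| < (n - 1) * n ^ (bigK m Lp - 1) := by
  set B : ℤ := (Lp.map (fun s' => |m - s'|)).foldr max 0 with hB
  have h1 : |m - s'| ≤ B := le_foldr_max _ (List.mem_map_of_mem (f := fun s' => |m - s'|) hs')
  have hBnn : 0 ≤ B := foldr_max_nonneg _
  have h2 : bigK m Lp - 1 = B.toNat := rfl
  rw [h2]
  have h3 : (B.toNat : ℤ) < 2 ^ B.toNat := by
    exact_mod_cast (Nat.lt_two_pow_self (n := B.toNat))
  have h4 : (2 : ℤ) ^ B.toNat ≤ n ^ B.toNat :=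
    pow_le_pow_left₀ (by norm_num) (by linarith) _
  have h5 : (B : ℤ) = B.toNat := (Int.toNat_of_nonneg hBnn).symm
  have h6 : (0 : ℤ) ≤ n ^ B.toNat := pow_nonneg (by linarith) _
  nlinarith

/-- The greedy list of chosen complement elements after `i` steps. -/
noncomputable def L (n : ℤ) : ℕ → List ℤ
  | 0 => []
  | (i + 1) =>
    let Lp := L n i
    let m := Denumerable.ofNat ℤ i
    if ∃ s' ∈ Lp, ∃ a : ℕ, m = n ^ a + s' then Lp
    else (m - n ^ bigK m Lp) :: Lp

lemma L_succ (n : ℤ) (i : ℕ) :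
    L n (i + 1) =
      if ∃ s' ∈ L n i, ∃ a : ℕ, Denumerable.ofNat ℤ i = n ^ a + s' then L n i
      else (Denumerable.ofNat ℤ i - n ^ bigK (Denumerable.ofNat ℤ i) (L n i)) :: L n i := by
  rfl

lemma L_mono (n : ℤ) {i i' : ℕ} (h : i ≤ i') {x : ℤ} (hx : x ∈ L n i) : x ∈ L n i' := by
  induction i' with
  | zero => exact (by omega : i = 0) ▸ hx
  | succ i' ih =>
    rcases Nat.lt_or_ge i (i' + 1) with h' | h'
    · have hx' : x ∈ L n i' := by
        rcases Nat.lt_succ_iff.mp h' |>.lt_or_eq with h'' | h''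
        · exact ih (le_of_lt h'')
        · exact h'' ▸ hx
      rw [L_succ]
      split
      · exact hx'
      · exact List.mem_cons_of_mem _ hx'
    · have : i = i' + 1 := by omega
      exact this ▸ hx

/-- Coverage: after step `i+1`, the `i`-th integer is covered. -/
lemma L_covers (n : ℤ) (i : ℕ) :
    ∃ s' ∈ L n (i + 1), ∃ a : ℕ, Denumerable.ofNat ℤ i = n ^ a + s' := by
  rw [L_succ]
  split
  · assumption
  · refine ⟨Denumerable.ofNat ℤ i - n ^ bigK (Denumerable.ofNat ℤ i) (L n i),
      List.mem_cons_self, bigK (Denumerable.ofNat ℤ i) (L n i), by ring⟩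

lemma pow_inj {n : ℤ} (hn : 3 ≤ n) {j a : ℕ} (h : n ^ j = n ^ a) : j = a := by
  have h1 : (1 : ℤ) < n := by linarith
  by_contra hne
  rcases Nat.lt_or_ge j a with h' | h'
  · exact absurd h (ne_of_lt (pow_lt_pow_right₀ h1 h'))
  · have h'' : a < j := by omega
    exact absurd h.symm (ne_of_lt (pow_lt_pow_right₀ h1 h''))

/-- Uniqueness invariant: representations through `L n i` are unique. -/
lemma L_uniq {n : ℤ} (hn : 3 ≤ n) (i : ℕ) :
    ∀ s₁ ∈ L n i, ∀ s₂ ∈ L n i, ∀ j a : ℕ, s₁ + n ^ j = s₂ + n ^ a → s₁ = s₂ ∧ j = a := by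
  induction i with
  | zero => intro s₁ hs₁; simp [L] at hs₁
  | succ i ih =>
    rw [L_succ]
    split
    · exact ih
    · rename_i hnc
      push_neg at hnc
      set m := Denumerable.ofNat ℤ i with hm
      set K := bigK m (L n i) with hK
      intro s₁ hs₁ s₂ hs₂ j a heq
      have key : ∀ s ∈ L n i, ∀ j' a' : ℕ, m - n ^ K + n ^ j' ≠ s + n ^ a' := by
        intro s hs j' a' hcontra
        have hc : ∀ b : ℕ, m - s ≠ n ^ b := by
          intro b hb
          exact hnc s hs b (by linarith)
        have hbig : |m - s| < (n - 1) * n ^ (K - 1) := bigK_big hn m (L n i) hs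
        exact lemA hn (bigK_pos m (L n i)) hbig hc j' a'
          (by linarith)
      rcases List.mem_cons.mp hs₁ with h₁ | h₁ <;> rcases List.mem_cons.mp hs₂ with h₂ | h₂
      · subst h₁; subst h₂
        have : n ^ j = n ^ a := by linarith
        exact ⟨rfl, pow_inj hn this⟩
      · subst h₁
        exact absurd heq (key s₂ h₂ j a)
      · subst h₂
        exact absurd heq.symm (key s₁ h₁ a j)
      · exact ih s₁ h₁ s₂ h₂ j a heq

/-- The complement set. -/
def Sc (n : ℤ) : Set ℤ := {x | ∃ i, x ∈ L n i}

lemma Sc_covers (n : ℤ) (m : ℤ) : ∃ s' ∈ Sc n, ∃ a : ℕ, m = n ^ a + s' := by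
  obtain ⟨s', hs', a, ha⟩ := L_covers n (Encodable.encode m)
  refine ⟨s', ⟨_, hs'⟩, a, ?_⟩
  rwa [Denumerable.ofNat_encode] at ha

lemma Sc_uniq {n : ℤ} (hn : 3 ≤ n) {s₁ s₂ : ℤ} (h₁ : s₁ ∈ Sc n) (h₂ : s₂ ∈ Sc n)
    (j a : ℕ) (heq : s₁ + n ^ j = s₂ + n ^ a) : s₁ = s₂ ∧ j = a := by
  obtain ⟨i₁, hi₁⟩ := h₁
  obtain ⟨i₂, hi₂⟩ := h₂
  exact L_uniq hn (max i₁ i₂) s₁ (L_mono n (le_max_left _ _) hi₁) s₂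
    (L_mono n (le_max_right _ _) hi₂) j a heq

end Stmt18Aux

theorem stmt18 (n : ℤ) (hn : 3 ≤ n) :
    ∃ S' : Set ℤ, {m : ℤ | ∃ k : ℕ, m = n ^ k} + S' = Set.univ ∧
      (∀ s ∈ {m : ℤ | ∃ k : ℕ, m = n ^ k},
        ({m : ℤ | ∃ k : ℕ, m = n ^ k} \ {s}) + S' ≠ Set.univ) ∧
      (∀ s' ∈ S',
        {m : ℤ | ∃ k : ℕ, m = n ^ k} + (S' \ {s'}) ≠ Set.univ) := by
  classical
  refine ⟨Stmt18Aux.Sc n, ?_, ?_, ?_⟩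
  · ext m
    simp only [Set.mem_univ, iff_true, Set.mem_add, Set.mem_setOf_eq]
    obtain ⟨s', hs', a, ha⟩ := Stmt18Aux.Sc_covers n m
    exact ⟨n ^ a, ⟨a, rfl⟩, s', hs', by linarith⟩
  · rintro s ⟨k, rfl⟩ hcon
    obtain ⟨s₀, hs₀, a₀, ha₀⟩ := Stmt18Aux.Sc_covers n 0
    have hm : (n ^ k + s₀ : ℤ) ∈ ({m : ℤ | ∃ k : ℕ, m = n ^ k} \ {n ^ k}) + Stmt18Aux.Sc n := by
      rw [hcon]; trivial
    rw [Set.mem_add] at hm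
    obtain ⟨x, hx, y, hy, hxy⟩ := hm
    obtain ⟨⟨j, rfl⟩, hxne⟩ := hx
    have huniq := Stmt18Aux.Sc_uniq hn hy hs₀ j k (by linarith)
    exact hxne (by rw [Set.mem_singleton_iff, huniq.2])
  · intro s' hs' hcon
    have hm : (n ^ 0 + s' : ℤ) ∈ {m : ℤ | ∃ k : ℕ, m = n ^ k} + (Stmt18Aux.Sc n \ {s'}) := by
      rw [hcon]; trivial
    rw [Set.mem_add] at hm
    obtain ⟨x, ⟨j, rfl⟩, y, ⟨hy, hyne⟩, hxy⟩ := hm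
    have huniq := Stmt18Aux.Sc_uniq hn hy hs' j 0 (by linarith)
    exact hyne (by rw [Set.mem_singleton_iff, huniq.1])
end

section
/- The set S = {2^k + k : k ≥ 0} ⊆ ℤ forms a co-minimal pair with some subset S' ⊆ ℤ, i.e., S + S' = ℤ, (S \ {s}) + S' ≠ ℤ for all s ∈ S, and S + (S' \ {s'}) ≠ ℤ for all s' ∈ S'. -/
open Pointwise

set_option maxRecDepth 8000
namespace S19
def s (k : ℕ) : ℤ := 2^k + k
def q (i : ℕ) : ℕ := 120*i + 120
def J (i : ℕ) : ℕ := q i + 24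
def K (i : ℕ) : ℕ := q i + 40
def h (k : ℕ) : ℕ := 120*k + 60
def w (k : ℕ) : ℤ := -(3 * 2^(h k))
def x (k : ℕ) : ℤ := s k + w k
def X : Set ℤ := Set.range x

def inLev : ℕ → ℤ → Prop
  | 0, v => |v| ≤ 2^(q 0)
  | (i+1), v => |v| ≤ 2^(q (i+1)) ∧ 2^(q i) < |v|

def P : ℕ → Set ℤ
  | 0 => {z | ∃ v : ℤ, inLev 0 v ∧ v ∉ X ∧ z = v - s (J 0)}
  | (i+1) => {z | ∃ v : ℤ, inLev (i+1) v ∧ v ∉ X ∧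
      (∀ u ∈ P i, v ≠ u + s (K i)) ∧ z = v - s (J (i+1))}

def T : Set ℤ := (⋃ i, P i) ∪ Set.range w

lemma pw_le {a b : ℕ} (hab : a ≤ b) : (2:ℤ)^a ≤ 2^b :=
  pow_le_pow_right₀ (by norm_num) hab

lemma pw_pos (a : ℕ) : (0:ℤ) < 2^a := pow_pos (by norm_num) a

lemma cast_lt_pw (k : ℕ) : (k:ℤ) < 2^k := by exact_mod_cast Nat.lt_two_pow_self (n := k)

lemma s_pos (k : ℕ) : 0 < s k := by
  have := pw_pos k; simp only [s]; positivity

lemma s_lb (k : ℕ) : (2:ℤ)^k ≤ s k := by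
  simp only [s]; have : (0:ℤ) ≤ k := by positivity
  linarith

lemma s_ub (k : ℕ) : s k ≤ 2^(k+1) := by
  simp only [s]
  have h1 := cast_lt_pw k
  have h2 : (2:ℤ)^(k+1) = 2 * 2^k := by ring
  linarith

lemma s_le {j k : ℕ} (h : j ≤ k) : s j ≤ s k := by
  simp only [s]
  have h1 := pw_le h
  have h2 : (j:ℤ) ≤ k := by exact_mod_cast h
  linarith

lemma s_gap {j m : ℕ} (h : j ≤ m) : 2^m < s (m+1) - s j := by
  simp only [s]
  push_cast
  have h1 : (2:ℤ)^j ≤ 2^m := pw_le h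
  have h2 : (2:ℤ)^(m+1) = 2 * 2^m := by ring
  have h3 : (j:ℤ) ≤ m := by exact_mod_cast h
  linarith

lemma s_lt {j k : ℕ} (h : j < k) : s j < s k := by
  obtain ⟨m, rfl⟩ : ∃ m, k = m + 1 := ⟨k-1, by omega⟩
  have h1 := s_gap (show j ≤ m by omega)
  have h2 := pw_pos m
  linarith

lemma s_inj {j k : ℕ} (h : s j = s k) : j = k := by
  rcases lt_trichotomy j k with hl | he | hg
  · exact absurd h (ne_of_lt (s_lt hl))
  · exact he
  · exact absurd h.symm (ne_of_lt (s_lt hg))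

lemma s_no_between {a : ℕ} {V : ℤ} (h1 : s a < V) (h2 : V < s (a+1)) :
    ∀ j, s j ≠ V := by
  intro j hj
  rcases le_or_gt j a with hle | hgt
  · exact absurd (hj ▸ s_le hle) (not_le.mpr h1)
  · exact absurd (hj ▸ s_le hgt) (not_le.mpr h2)

lemma inLev_le {i : ℕ} {v : ℤ} (hv : inLev i v) : |v| ≤ 2^(q i) := by
  cases i with
  | zero => exact hv
  | succ i => exact hv.1

lemma P_elim {i : ℕ} {t : ℤ} (ht : t ∈ P i) :
    ∃ v : ℤ, inLev i v ∧ v ∉ X ∧ t = v - s (J i) ∧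
      (∀ i₀, ∀ u ∈ P i₀, i = i₀ + 1 → v ≠ u + s (K i₀)) := by
  cases i with
  | zero =>
    obtain ⟨v, h1, h2, h3⟩ := ht
    exact ⟨v, h1, h2, h3, fun i₀ u _ hi => by omega⟩
  | succ i =>
    obtain ⟨v, h1, h2, h3, h4⟩ := ht
    refine ⟨v, h1, h2, h4, fun i₀ u hu hi => ?_⟩
    obtain rfl : i₀ = i := by omega
    exact h3 u hu

lemma P_intro {i : ℕ} {v : ℤ} (h1 : inLev i v) (h2 : v ∉ X)
    (h3 : ∀ i₀, ∀ u ∈ P i₀, i = i₀ + 1 → v ≠ u + s (K i₀)) :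
    v - s (J i) ∈ P i := by
  cases i with
  | zero => exact ⟨v, h1, h2, rfl⟩
  | succ i => exact ⟨v, h1, h2, fun u hu => h3 i u hu rfl, rfl⟩

lemma P_neg {i : ℕ} {t : ℤ} (ht : t ∈ P i) : t < 0 := by
  obtain ⟨v, hlev, -, rfl, -⟩ := P_elim ht
  have h1 : v ≤ 2^(q i) := le_trans (le_abs_self v) (inLev_le hlev)
  have h2 : (2:ℤ)^(J i) ≤ s (J i) := s_lb _
  have h3 : (2:ℤ)^(q i + 1) ≤ 2^(J i) := pw_le (by simp only [J]; omega)
  have h4 : (2:ℤ)^(q i + 1) = 2 * 2^(q i) := by ring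
  have h5 := pw_pos (q i)
  linarith

lemma T_neg {t : ℤ} (ht : t ∈ T) : t < 0 := by
  rcases ht with hp | hw
  · obtain ⟨Pi, ⟨i, rfl⟩, hmem⟩ := hp
    exact P_neg hmem
  · obtain ⟨k, rfl⟩ := hw
    have := pw_pos (h k)
    simp only [w]; linarith

lemma E1 {k j : ℕ} {t' : ℤ} (ht : t' ∈ T) (he : s j + t' = x k) :
    j = k ∧ t' = w k := by
  rcases ht with hp | hw
  ·
    -- t' in some piece P i'
    exfalso
    obtain ⟨Pi, ⟨i', rfl⟩, hmem⟩ := hp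
    obtain ⟨v, hlev, hX, rfl, -⟩ := P_elim hmem
    -- v = s k - 3*2^(h k) - s j + s (J i')
    have hv : v = s k - 3 * 2^(h k) - s j + s (J i') := by
      simp only [x, w] at he; linarith
    have habs := inLev_le hlev
    rcases lt_trichotomy j (J i') with hlt | heqj | hgt
    · -- j < J i'
      rcases (by simp only [h, J, q]; omega :
          h k + 84 ≤ J i' ∨ J i' + 36 ≤ h k) with hc | hc
      · -- h k far below J i' : v large positive
        obtain ⟨m, hm⟩ : ∃ m, J i' = m + 1 := ⟨J i' - 1, by simp only [J, q]; omega⟩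
        have g1 : 2^m < s (J i') - s j := by
          rw [hm]; exact s_gap (by omega)
        have g2 : (2:ℤ)^(h k + 2) ≤ 2^(q i') := pw_le (by simp only [h, J, q] at hc ⊢; omega)
        have g3 : (2:ℤ)^(h k + 2) = 4 * 2^(h k) := by ring
        have g4 : (2:ℤ)^(q i' + 2) ≤ 2^m := pw_le (by simp only [J, q] at hm ⊢; omega)
        have g5 : (2:ℤ)^(q i' + 2) = 4 * 2^(q i') := by ring
        have g6 : 1 ≤ s k := s_pos k
        have g7 := pw_pos (q i')
        have g8 := pw_pos (h k)
        have : 2^(q i') < v := by linarith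
        have : (2:ℤ)^(q i') < |v| := lt_of_lt_of_le this (le_abs_self v)
        linarith
      · -- h k above J i' : v large negative
        have g1 : s (J i') ≤ 2^(J i' + 1) := s_ub _
        have g2 : (2:ℤ)^(J i' + 1) ≤ 2^(h k) := pw_le (by omega)
        have g3 : s k ≤ 2^(k+1) := s_ub k
        have g4 : (2:ℤ)^(k+1) ≤ 2^(h k) := pw_le (by simp only [h]; omega)
        have g5 : 0 < s j := s_pos j
        have g6 : (2:ℤ)^(q i') ≤ 2^(h k) := pw_le (by simp only [J, q] at hc ⊢; omega)
        have g7 := pw_pos (q i')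
        have g8 := pw_pos (h k)
        have : v < -(2:ℤ)^(q i') := by linarith
        have : (2:ℤ)^(q i') < |v| := by
          have := neg_le_abs v; linarith
        linarith
    · -- j = J i' : v = x k ∈ X
      apply hX
      refine ⟨k, ?_⟩
      rw [heqj] at hv
      simp only [x, w]; linarith
    · -- j > J i' : v large negative
      obtain ⟨m, hm⟩ : ∃ m, j = m + 1 := ⟨j - 1, by omega⟩
      have g1 : 2^m < s j - s (J i') := by
        rw [hm]; exact s_gap (by omega)
      have g2 : (2:ℤ)^(J i') ≤ 2^m := pw_le (by omega)
      have g3 : (2:ℤ)^(q i' + 1) ≤ 2^(J i') := pw_le (by simp only [J]; omega)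
      have g4 : (2:ℤ)^(q i' + 1) = 2 * 2^(q i') := by ring
      have g5 : s k ≤ 2^(k+1) := s_ub k
      have g6 : (2:ℤ)^(k+1) ≤ 2^(h k) := pw_le (by simp only [h]; omega)
      have g7 := pw_pos (h k)
      have g8 := pw_pos (q i')
      have : v < -(2:ℤ)^(q i') := by linarith
      have : (2:ℤ)^(q i') < |v| := by
        have := neg_le_abs v; linarith
      linarith

  · -- t' = w k'
    obtain ⟨k', rfl⟩ := hw
    -- s j - 3*2^(h k') = s k - 3*2^(h k)
    have heq : s j - 3 * 2^(h k') = s k - 3 * 2^(h k) := by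
      simp only [x, w] at he; linarith
    rcases lt_trichotomy k' k with hlt | heqk | hgt
    · -- k' < k : impossible
      exfalso
      have e1 : h k' + 2 ≤ h k := by simp only [h]; omega
      have f1 : (2:ℤ)^(h k' + 2) ≤ 2^(h k) := pw_le e1
      have f2 : (2:ℤ)^(h k' + 2) = 4 * 2^(h k') := by ring
      have f3 : s k ≤ 2^(k+1) := s_ub k
      have f4 : (2:ℤ)^(k+1) ≤ 2^(h k) := pw_le (by simp only [h]; omega)
      have f5 : 0 < s j := s_pos j
      have f6 := pw_pos (h k')
      linarith
    · -- k' = k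
      subst heqk
      have : s j = s k' := by linarith
      exact ⟨s_inj this, rfl⟩
    · -- k' > k : impossible
      exfalso
      obtain ⟨m, hm⟩ : ∃ m, h k' = m + 1 := ⟨h k' - 1, by simp only [h]; omega⟩
      have e1 : h k + 2 ≤ m := by simp only [h] at hm ⊢; omega
      have f1 : (2:ℤ)^(h k + 2) ≤ 2^m := pw_le e1
      have f2 : (2:ℤ)^(h k + 2) = 4 * 2^(h k) := by ring
      have f3 : 1 ≤ s k := s_pos k
      have f4 : s k ≤ 2^(k+1) := s_ub k
      have f5 : (2:ℤ)^(k+1) ≤ 2^(h k) := pw_le (by simp only [h]; omega)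
      have hcast : (m:ℤ) < 2^m := cast_lt_pw m
      -- s j = s k + 3*2^(h k') - 3*2^(h k), with h k' = m+1
      have hv : s j = s k + 6 * 2^m - 3 * 2^(h k) := by
        rw [hm] at heq
        have : (2:ℤ)^(m+1) = 2 * 2^m := by ring
        linarith
      have low : s (m+2) < s j := by
        have : s (m+2) = 2^(m+2) + (m+2 : ℕ) := rfl
        rw [this]
        push_cast
        have : (2:ℤ)^(m+2) = 4 * 2^m := by ring
        linarith
      have high : s j < s (m+3) := by
        have : s (m+3) = 2^(m+3) + (m+3 : ℕ) := rfl
        rw [this]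
        push_cast
        have h8 : (2:ℤ)^(m+3) = 8 * 2^m := by ring
        have f6 := pw_pos (h k)
        linarith
      have : s (m+2) < s j ∧ s j < s ((m+2)+1) := ⟨low, by simpa using high⟩
      exact s_no_between this.1 this.2 j rfl

lemma E2 {i : ℕ} {t t' : ℤ} {j : ℕ} (ht : t ∈ P i) (ht' : t' ∈ T)
    (he : s j + t' = t + s (K i)) : j = K i ∧ t' = t := by
  obtain ⟨v₀, hlev₀, hX₀, rfl, -⟩ := P_elim ht
  have habs₀ : |v₀| ≤ 2^(q i) := inLev_le hlev₀
  have hv₀l : -(2:ℤ)^(q i) ≤ v₀ := by have := neg_abs_le v₀; linarith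
  have hv₀u : v₀ ≤ 2^(q i) := le_trans (le_abs_self _) habs₀
  have hKJ : s (K i) - s (J i) = 2^(q i + 40) - 2^(q i + 24) + 16 := by
    simp only [s, K, J]; push_cast; ring
  have e16 : (16:ℤ) ≤ 2^(q i) := by
    have h4 : (2:ℤ)^4 ≤ 2^(q i) := pw_le (by simp only [q]; omega)
    norm_num at h4; linarith
  have eA : (2:ℤ)^(q i) ≤ 2^(q i + 24) := pw_le (by omega)
  have eB : (2:ℤ)^(q i + 25) = 2 * 2^(q i + 24) := by ring
  have eA2 : (2:ℤ)^(q i + 1) ≤ 2^(q i + 24) := pw_le (by omega)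
  have eA3 : (2:ℤ)^(q i + 1) = 2 * 2^(q i) := by ring
  have hDl : 2^(q i + 40) - 2^(q i + 25) ≤ v₀ - s (J i) + s (K i) := by linarith
  have hDu : v₀ - s (J i) + s (K i) ≤ 2^(q i + 40) := by linarith
  have eC : (2:ℤ)^(q i + 25) ≤ 2^(q i + 39) := pw_le (by omega)
  have eD : (2:ℤ)^(q i + 40) = 2 * 2^(q i + 39) := by ring
  have eE : (2:ℤ)^(q i) < 2^(q i + 39) := by
    have := pw_le (show q i + 1 ≤ q i + 39 by omega)
    have h2 : (2:ℤ)^(q i + 1) = 2 * 2^(q i) := by ring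
    have := pw_pos (q i); linarith
  have hDq : (2:ℤ)^(q i) < v₀ - s (J i) + s (K i) := by linarith
  rcases lt_trichotomy j (K i) with hlt | heqj | hgt
  · -- j < K i : t' would be nonnegative
    exfalso
    have hsj : s j ≤ s (q i + 39) := s_le (by simp only [K] at hlt; omega)
    have hexp : s (q i + 39) = 2^(q i + 39) + ((q i : ℤ) + 39) := by
      simp only [s]; push_cast; ring
    have hc : ((q i : ℤ) + 39) ≤ 2^(q i + 38) := by
      have := cast_lt_pw (q i + 38); push_cast at this; linarith
    have eF : (2:ℤ)^(q i + 39) = 2 * 2^(q i + 38) := by ring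
    have eG : (2:ℤ)^(q i + 25) ≤ 2^(q i + 37) := pw_le (by omega)
    have eH : (2:ℤ)^(q i + 37) < 2^(q i + 38) := by
      have h2 : (2:ℤ)^(q i + 38) = 2 * 2^(q i + 37) := by ring
      have := pw_pos (q i + 37); linarith
    have ht'0 : 0 < t' := by linarith
    exact absurd (T_neg ht') (by linarith)
  · -- j = K i
    subst heqj
    exact ⟨rfl, by linarith⟩
  · -- j > K i
    exfalso
    have hj41 : q i + 41 ≤ j := by simp only [K] at hgt; omega
    rcases ht' with hp | hw
    · -- t' in a piece P i''
      obtain ⟨Pi, ⟨i'', rfl⟩, hmem⟩ := hp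
      obtain ⟨v, hlev, hX, ht'e, hexcl⟩ := P_elim hmem
      have hv : v = (v₀ - s (J i) + s (K i)) - s j + s (J i'') := by
        rw [ht'e] at he; linarith
      have habs : |v| ≤ 2^(q i'') := inLev_le hlev
      rcases lt_trichotomy j (J i'') with hltB | heqB | hgtB
      · -- j < J i'' : v too large positive
        obtain ⟨m, hm⟩ : ∃ m, J i'' = m + 1 := ⟨J i'' - 1, by simp only [J, q]; omega⟩
        have g1 : 2^m < s (J i'') - s j := by rw [hm]; exact s_gap (by omega)
        have g2 : (2:ℤ)^(q i'') ≤ 2^m := pw_le (by simp only [J, q] at hm ⊢; omega)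
        have : (2:ℤ)^(q i'') < v := by linarith
        have := le_abs_self v; linarith
      · -- j = J i'' : v = D, level/exclusion contradiction
        have hvD : v = v₀ - s (J i) + s (K i) := by rw [heqB] at hv; linarith
        have hvpos : 0 < v := by linarith
        have habsv : |v| = v := abs_of_pos hvpos
        cases i'' with
        | zero =>
          have : (2:ℤ)^(q 0) ≤ 2^(q i) := pw_le (by simp only [q]; omega)
          rw [habsv] at habs
          have habs' : v ≤ 2^(q 0) := habs
          linarith
        | succ ι =>
          have hup : v ≤ 2^(q (ι+1)) := by rw [habsv] at habs; exact habs
          have hlow : 2^(q ι) < v := by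
            have h2 : 2^(q ι) < |v| := hlev.2
            rw [habsv] at h2; exact h2
          rcases lt_trichotomy ι i with hι | heqι | hι
          · have : (2:ℤ)^(q (ι+1)) ≤ 2^(q i) := pw_le (by simp only [q]; omega)
            linarith
          · subst heqι
            exact hexcl ι (v₀ - s (J ι)) ht rfl (by linarith)
          · have h1 : (2:ℤ)^(q i + 40) ≤ 2^(q ι) := pw_le (by simp only [q]; omega)
            linarith
      · -- j > J i'' : v too large negative
        obtain ⟨m, hm⟩ : ∃ m, j = m + 1 := ⟨j - 1, by omega⟩
        have g1 : 2^m < s j - s (J i'') := by rw [hm]; exact s_gap (by omega)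
        rcases (by omega : q i + 42 ≤ j ∨ j = q i + 41) with hc | hc
        · have f2 : (2:ℤ)^(q i + 41) ≤ 2^m := pw_le (by omega)
          have f3 : (2:ℤ)^(q i + 41) = 2 * 2^(q i + 40) := by ring
          have f4 : (2:ℤ)^(J i'') ≤ 2^m := pw_le (by omega)
          have f5 : (2:ℤ)^(q i'' + 1) ≤ 2^(J i'') := pw_le (by simp only [J]; omega)
          have f6 : (2:ℤ)^(q i'' + 1) = 2 * 2^(q i'') := by ring
          have : (2:ℤ)^(q i'') < -v := by linarith
          have := neg_le_abs v; linarith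
        · -- j = q i + 41
          have hcc := hc
          have hqB : q i'' ≤ q i := by
            have h1 := hgtB
            simp only [J, q] at h1 ⊢
            simp only [q] at hcc
            omega
          have g2 : s (J i'') ≤ 2^(J i'' + 1) := s_ub _
          have g3 : (2:ℤ)^(J i'' + 1) ≤ 2^(q i + 25) := pw_le (by simp only [J, q] at hqB ⊢; omega)
          have g4 : s j = 2^(q i + 41) + ((q i : ℤ) + 41) := by
            rw [hc]; simp only [s]; push_cast; ring
          have g5 : (2:ℤ)^(q i + 41) = 2 * 2^(q i + 40) := by ring
          have g6 : (2:ℤ)^(q i + 25) ≤ 2^(q i + 39) := pw_le (by omega)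
          have g7 : (0:ℤ) ≤ (q i : ℤ) + 41 := by omega
          have g8 : (2:ℤ)^(q i'') ≤ 2^(q i) := pw_le hqB
          have : (2:ℤ)^(q i'') < -v := by linarith
          have := neg_le_abs v; linarith
    · -- t' = w k'
      obtain ⟨k', rfl⟩ := hw
      have hsj : s j = (v₀ - s (J i) + s (K i)) + 3 * 2^(h k') := by
        simp only [w] at he; linarith
      rcases (by simp only [h, q]; omega : h k' + 2 ≤ q i ∨ q i + 60 ≤ h k') with hc | hc
      · -- h k' small : s j too small
        have g1 : s (q i + 41) ≤ s j := s_le (by omega)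
        have g2 : s (q i + 41) = 2^(q i + 41) + ((q i : ℤ) + 41) := by
          simp only [s]; push_cast; ring
        have g3 : (2:ℤ)^(h k' + 2) ≤ 2^(q i) := pw_le hc
        have g4 : (2:ℤ)^(h k' + 2) = 4 * 2^(h k') := by ring
        have g5 : (2:ℤ)^(q i + 41) = 2 * 2^(q i + 40) := by ring
        have g6 : (2:ℤ)^(q i) ≤ 2^(q i + 40) := pw_le (by omega)
        have g7 : (0:ℤ) ≤ (q i : ℤ) + 41 := by omega
        linarith
      · -- h k' large : s j strictly between s (h k' + 1) and s (h k' + 2)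
        have hcast : (h k' : ℤ) < 2^(h k') := cast_lt_pw (h k')
        have g1 : (2:ℤ)^(q i + 40) ≤ 2^(h k') := pw_le (by omega)
        have low : s (h k' + 1) < s j := by
          have : s (h k' + 1) = 2^(h k' + 1) + ((h k' : ℤ) + 1) := by
            simp only [s]; push_cast; ring
          rw [this]
          have h2 : (2:ℤ)^(h k' + 1) = 2 * 2^(h k') := by ring
          linarith
        have high : s j < s (h k' + 2) := by
          have : s (h k' + 2) = 2^(h k' + 2) + ((h k' : ℤ) + 2) := by
            simp only [s]; push_cast; ring
          rw [this]
          have h4 : (2:ℤ)^(h k' + 2) = 4 * 2^(h k') := by ring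
          linarith
        exact s_no_between low (by simpa using high) j rfl

lemma cover (n : ℤ) : ∃ j : ℕ, ∃ t' ∈ T, s j + t' = n := by
  by_cases hx : n ∈ X
  · obtain ⟨k, hk⟩ := hx
    exact ⟨k, w k, Or.inr ⟨k, rfl⟩, hk⟩
  · by_cases he : ∃ i, ∃ u ∈ P i, n = u + s (K i)
    · obtain ⟨i, u, hu, hn⟩ := he
      exact ⟨K i, u, Or.inl (Set.mem_iUnion.mpr ⟨i, hu⟩), by linarith⟩
    · have hex : ∃ i : ℕ, |n| ≤ 2^(q i) := by
        refine ⟨n.natAbs, ?_⟩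
        have h1 : |n| = (n.natAbs : ℤ) := Int.abs_eq_natAbs n
        have h2 : (n.natAbs : ℤ) < 2^(n.natAbs) := cast_lt_pw _
        have h3 : (2:ℤ)^(n.natAbs) ≤ 2^(q n.natAbs) := pw_le (by simp only [q]; omega)
        linarith
      obtain ⟨i, hfi, hmin⟩ : ∃ i, |n| ≤ 2^(q i) ∧ ∀ i', i' < i → ¬ |n| ≤ 2^(q i') :=
        ⟨Nat.find hex, Nat.find_spec hex, fun i' hlt => Nat.find_min hex hlt⟩
      have hlev : inLev i n := by
        cases i with
        | zero => exact hfi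
        | succ ι => exact ⟨hfi, not_le.mp (hmin ι (Nat.lt_succ_self ι))⟩
      have hP : n - s (J i) ∈ P i :=
        P_intro hlev hx (fun i₀ u hu hi heq => he ⟨i₀, u, hu, heq⟩)
      exact ⟨J i, n - s (J i), Or.inl (Set.mem_iUnion.mpr ⟨i, hP⟩), by ring⟩

end S19

open S19 in
theorem stmt19 :
    ∃ S' : Set ℤ, {m : ℤ | ∃ k : ℕ, m = 2 ^ k + k} + S' = Set.univ ∧
      (∀ s ∈ {m : ℤ | ∃ k : ℕ, m = 2 ^ k + k},
        ({m : ℤ | ∃ k : ℕ, m = 2 ^ k + k} \ {s}) + S' ≠ Set.univ) ∧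
      (∀ s' ∈ S',
        {m : ℤ | ∃ k : ℕ, m = 2 ^ k + k} + (S' \ {s'}) ≠ Set.univ) := by
  refine ⟨S19.T, ?_, ?_, ?_⟩
  · -- covering
    rw [Set.eq_univ_iff_forall]
    intro n
    obtain ⟨j, t', ht', hsum⟩ := cover n
    exact Set.mem_add.mpr ⟨S19.s j, ⟨j, rfl⟩, t', ht', hsum⟩
  · -- minimality of the left set
    rintro s₀ ⟨k, rfl⟩ hcontra
    have hx : S19.x k ∈ ({m : ℤ | ∃ k : ℕ, m = 2 ^ k + k} \ {(2:ℤ) ^ k + k}) + S19.T :=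
      hcontra.symm ▸ Set.mem_univ _
    obtain ⟨a, ha, b, hb, hab⟩ := Set.mem_add.mp hx
    obtain ⟨⟨j, rfl⟩, hne⟩ := ha
    have : j = k ∧ b = S19.w k := E1 hb hab
    exact hne (by rw [this.1]; exact rfl)
  · -- minimality of S'
    rintro t' ht' hcontra
    rcases ht' with hp | hw
    · obtain ⟨Pi, ⟨i, rfl⟩, hmem⟩ := hp
      have hx : t' + S19.s (S19.K i) ∈
          {m : ℤ | ∃ k : ℕ, m = 2 ^ k + k} + (S19.T \ {t'}) :=
        hcontra.symm ▸ Set.mem_univ _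
      obtain ⟨a, ⟨j, rfl⟩, b, ⟨hb, hbne⟩, hab⟩ := Set.mem_add.mp hx
      have := E2 hmem hb hab
      exact hbne (by rw [this.2]; rfl)
    · obtain ⟨k, rfl⟩ := hw
      have hx : S19.x k ∈ {m : ℤ | ∃ k : ℕ, m = 2 ^ k + k} + (S19.T \ {S19.w k}) :=
        hcontra.symm ▸ Set.mem_univ _
      obtain ⟨a, ⟨j, rfl⟩, b, ⟨hb, hbne⟩, hab⟩ := Set.mem_add.mp hx
      have := E1 hb hab
      exact hbne (by rw [this.2]; rfl)
end
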